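/- Let X be a real normed space, t ≥ 1, and x, y unit vectors with x Birkhoff-orthogonal to y. Then (‖x + t·y‖ − ‖t·x − y‖)/t ≤ ‖x + y‖ − 1. -/

import Mathlib

theorem stmt_17 {X : Type*} [NormedAddCommGroup X] [NormedSpace ℝ X] (x y : X)
    (hx : ‖x‖ = 1) (hy : ‖y‖ = 1) (hB : ∀ s : ℝ, ‖x + s • y‖ ≥ ‖x‖)
    (t : ℝ) (ht : 1 ≤ t) :
    (‖x + t • y‖ - ‖t • x - y‖) / t ≤ ‖x + y‖ - 1 := by
  have ht0 : 0 < t := lt_of_lt_of_le one_pos ht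
  have h1 : ‖x + t • y‖ ≤ ‖x + y‖ + (t - 1) := by
    have : x + t • y = (x + y) + (t - 1) • y := by
      rw [sub_smul, one_smul]; abel
    rw [this]
    calc ‖(x + y) + (t - 1) • y‖ ≤ ‖x + y‖ + ‖(t - 1) • y‖ := norm_add_le _ _
      _ = ‖x + y‖ + (t - 1) := by
          rw [norm_smul, hy, mul_one, Real.norm_eq_abs, abs_of_nonneg (by linarith)]
  have h2 : t ≤ ‖t • x - y‖ := by
    have : t • x - y = t • (x + (-1/t) • y) := by
      rw [smul_add, smul_smul]
      field_simp
      simp [sub_eq_add_neg]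
    rw [this, norm_smul, Real.norm_eq_abs, abs_of_pos ht0]
    have := hB (-1/t)
    rw [hx] at this
    nlinarith
  have h3 : 1 ≤ ‖x + y‖ := by
    have := hB 1
    rw [hx, one_smul] at this
    linarith
  rw [div_le_iff₀ ht0]
  nlinarith
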